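/- The series Σ_{n=1}^{∞} H(n)·Fib(n)/2ⁿ converges and equals (3/√5)·log( (3+√5)/(3−√5) ) + log 4, where Fib(n) is the n-th Fibonacci number and H(n) = Σ_{k=1}^{n} 1/k is the n-th harmonic number. -/

import Mathlib

noncomputable def harmonicR (n : ℕ) : ℝ := ∑ k ∈ Finset.Icc 1 n, (1 : ℝ) / k

lemma hasSum_harmonic_mul_pow {x : ℝ} (hx : |x| < 1) :
    HasSum (fun n : ℕ => harmonicR n * x ^ n) (-Real.log (1 - x) * (1 - x)⁻¹) := by
  have hlog : HasSum (fun k : ℕ => x ^ k / k) (-Real.log (1 - x)) := by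
    have h1 := Real.hasSum_pow_div_log_of_abs_lt_one hx
    have h2 : HasSum (fun n : ℕ => x ^ (n + 1) / ((n + 1 : ℕ) : ℝ)) (-Real.log (1 - x)) := by
      refine h1.congr_fun fun n => ?_
      push_cast; ring
    have h3 := (hasSum_nat_add_iff (f := fun k : ℕ => x ^ k / (k : ℝ)) 1).mp h2
    simpa using h3
  have hf : Summable fun k : ℕ => ‖x ^ k / k‖ := by
    have h4 : Summable fun k : ℕ => |x| ^ k / k := by
      have h1 := Real.hasSum_pow_div_log_of_abs_lt_one (x := |x|) (by rwa [abs_abs])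
      have h2 : HasSum (fun n : ℕ => |x| ^ (n + 1) / ((n + 1 : ℕ) : ℝ)) (-Real.log (1 - |x|)) := by
        refine h1.congr_fun fun n => ?_
        push_cast; ring
      have h3 := (hasSum_nat_add_iff (f := fun k : ℕ => |x| ^ k / (k : ℝ)) 1).mp h2
      exact (by simpa using h3 : HasSum _ _).summable
    refine h4.congr fun k => ?_
    rw [norm_div, norm_pow, Real.norm_eq_abs, Real.norm_eq_abs, Nat.abs_cast]
  have hg : Summable fun k : ℕ => ‖x ^ k‖ := by
    simpa [norm_pow] using summable_geometric_of_lt_one (abs_nonneg x) hx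
  have H := hasSum_sum_range_mul_of_summable_norm hf hg
  rw [hlog.tsum_eq, (hasSum_geometric_of_abs_lt_one hx).tsum_eq] at H
  refine H.congr_fun fun n => ?_
  have h1 : ∀ k ∈ Finset.range (n + 1), x ^ k / k * x ^ (n - k) = x ^ n * (1 / k) := by
    intro k hk
    rcases Nat.eq_zero_or_pos k with rfl | hk0
    · simp
    · rw [Finset.mem_range, Nat.lt_succ_iff] at hk
      rw [div_mul_eq_mul_div, ← pow_add, Nat.add_sub_cancel' hk]
      ring
  rw [Finset.sum_congr rfl h1, ← Finset.mul_sum, harmonicR, mul_comm]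
  congr 1
  refine Finset.sum_subset ?_ ?_
  · intro k hk; rw [Finset.mem_Icc] at hk
    simp [Finset.mem_range, Nat.lt_succ_iff, hk.2]
  · intro k hkt hks
    rw [Finset.mem_range, Nat.lt_succ_iff] at hkt
    simp only [Finset.mem_Icc, not_and, not_le] at hks
    have : k = 0 := by omega
    simp [this]

theorem harmonic_fib_series :
    HasSum (fun n : ℕ => harmonicR n * (Nat.fib n : ℝ) / 2 ^ n)
      ((3 / Real.sqrt 5) * Real.log ((3 + Real.sqrt 5) / (3 - Real.sqrt 5)) +
        Real.log 4) := by
  set s : ℝ := Real.sqrt 5 with hs_def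
  have hs2 : s ^ 2 = 5 := Real.sq_sqrt (by norm_num)
  have hs_pos : 0 < s := Real.sqrt_pos.mpr (by norm_num)
  have hs_lt3 : s < 3 := by nlinarith
  have hs_gt2 : 2 < s := by nlinarith
  have ha : |(1 + s) / 4| < 1 := by rw [abs_lt]; constructor <;> nlinarith
  have hb : |(1 - s) / 4| < 1 := by rw [abs_lt]; constructor <;> nlinarith
  have h1 := (hasSum_harmonic_mul_pow ha).mul_left (1 / s)
  have h2 := (hasSum_harmonic_mul_pow hb).mul_left (1 / s)
  have H := h1.sub h2
  have hphi : ((1 + s) / 4 : ℝ) = Real.goldenRatio / 2 := by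
    rw [Real.goldenRatio]; ring
  have hpsi : ((1 - s) / 4 : ℝ) = Real.goldenConj / 2 := by
    rw [Real.goldenConj]; ring
  have hfun : ∀ n : ℕ, harmonicR n * (Nat.fib n : ℝ) / 2 ^ n =
      1 / s * (harmonicR n * ((1 + s) / 4) ^ n) -
      1 / s * (harmonicR n * ((1 - s) / 4) ^ n) := by
    intro n
    rw [Real.coe_fib_eq, hphi, hpsi, div_pow, div_pow]
    have h2n : (2 : ℝ) ^ n ≠ 0 := by positivity
    have h4 : (4 : ℝ) ^ n = 2 ^ n * 2 ^ n := by
      rw [show (4 : ℝ) = 2 * 2 by norm_num, mul_pow]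
    field_simp
    rw [div_pow, div_pow, show ((2:ℝ) ^ 2) = 4 by norm_num, h4]
    field_simp
    ring
  have Hval : 1 / s * (-Real.log (1 - (1 + s) / 4) * (1 - (1 + s) / 4)⁻¹) -
      1 / s * (-Real.log (1 - (1 - s) / 4) * (1 - (1 - s) / 4)⁻¹) =
      3 / s * Real.log ((3 + s) / (3 - s)) + Real.log 4 := by
    have e1 : (1 : ℝ) - (1 + s) / 4 = (3 - s) / 4 := by ring
    have e2 : (1 : ℝ) - (1 - s) / 4 = (3 + s) / 4 := by ring
    have hm : (0 : ℝ) < 3 - s := by linarith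
    have hp : (0 : ℝ) < 3 + s := by linarith
    have l1 : Real.log ((3 - s) / 4) = Real.log (3 - s) - Real.log 4 :=
      Real.log_div (ne_of_gt hm) (by norm_num)
    have l2 : Real.log ((3 + s) / 4) = Real.log (3 + s) - Real.log 4 :=
      Real.log_div (ne_of_gt hp) (by norm_num)
    have l3 : Real.log ((3 + s) / (3 - s)) = Real.log (3 + s) - Real.log (3 - s) :=
      Real.log_div (ne_of_gt hp) (ne_of_gt hm)
    have lprod : Real.log (3 + s) + Real.log (3 - s) = Real.log 4 := by
      rw [← Real.log_mul (ne_of_gt hp) (ne_of_gt hm)]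
      congr 1
      nlinarith
    have hmne : (3 : ℝ) - s ≠ 0 := ne_of_gt hm
    have hpne : (3 : ℝ) + s ≠ 0 := ne_of_gt hp
    have k1 : ((3 - s) / 4 : ℝ)⁻¹ = 3 + s := by
      rw [inv_div, div_eq_iff hmne]; nlinarith
    have k2 : ((3 + s) / 4 : ℝ)⁻¹ = 3 - s := by
      rw [inv_div, div_eq_iff hpne]; nlinarith
    rw [e1, e2, l1, l2, l3, k1, k2]
    field_simp
    linear_combination (-s) * lprod
  exact Hval ▸ (H.congr_fun hfun)
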